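/- Suppose $S \subseteq \{\alpha < \omega_2 : \mathrm{cf}(\alpha) = \omega_1\}$ is stationary in $\omega_2$ and $\mathrm{Unif}^c_{S,2}$ holds. Then the Continuum Hypothesis holds, i.e., $2^{\aleph_0} = \aleph_1$. -/

import Mathlib

noncomputable section

universe u

open Cardinal

/-- The first uncountable ordinal. -/
def omega1 : Ordinal := (aleph 1).ord

/-- The second uncountable ordinal. -/
def omega2 : Ordinal := (aleph 2).ord

/-- The order type of a set of ordinals: the unique ordinal `o` such that `A` is the image
of `Iio o` under a strictly monotone map (with junk value if no such `o` exists). -/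
def OT (A : Set Ordinal.{u}) : Ordinal.{u} :=
  sInf {o : Ordinal.{u} | ∃ g : Ordinal.{u} → Ordinal.{u},
    StrictMonoOn g (Set.Iio o) ∧ g '' Set.Iio o = A}

/-- `C` is a club (closed and unbounded) subset of `κ`: all of its members are `< κ`, it is
unbounded in `κ`, and it contains the supremum of each of its nonempty subsets bounded in `κ`. -/
def IsClubIn (C : Set Ordinal) (κ : Ordinal) : Prop :=
  (∀ x ∈ C, x < κ) ∧ (∀ α < κ, ∃ β ∈ C, α < β) ∧
  (∀ S : Set Ordinal, S ⊆ C → S.Nonempty → sSup S < κ → sSup S ∈ C)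

/-- `S` is a stationary subset of `κ`: it meets every club of `κ`. -/
def IsStationaryIn (S : Set Ordinal) (κ : Ordinal) : Prop :=
  (∀ x ∈ S, x < κ) ∧ ∀ C, IsClubIn C κ → (S ∩ C).Nonempty

/-- `Unif^c_{S,X}`: for every (constant-colouring assignment) `F : S → X` there is
`H : sup S → X` uniformizing `F` modulo clubs: for every `α ∈ S` the set
`{ξ < α : H ξ = F α}` contains a club of `α`. -/
def UnifC (S : Set Ordinal) (X : Type) : Prop :=
  ∀ F : Ordinal → X, ∃ H : Ordinal → X,
    ∀ α ∈ S, ∃ C, IsClubIn C α ∧ ∀ ξ ∈ C, H ξ = F α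

section ShelahAux
open Ordinal Set

lemma aleph_two_eq : (aleph 2 : Cardinal.{u}) = Order.succ (aleph 1) := by
  rw [show (2 : Ordinal) = Order.succ 1 by rw [← Ordinal.add_one_eq_succ]; norm_num,
    Cardinal.aleph_succ]

lemma cof_omega2 : (omega2.{u}).cof = aleph 2 := by
  rw [omega2, aleph_two_eq]
  exact (Cardinal.isRegular_succ (Cardinal.aleph0_le_aleph 1)).cof_eq

lemma omega2_isLimit : Order.IsSuccLimit (omega2.{u}) :=
  Cardinal.isSuccLimit_ord (Cardinal.aleph0_le_aleph 2)

lemma aleph0_lt_aleph_two : (ℵ₀ : Cardinal.{u}) < aleph 2 :=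
  aleph0_lt_aleph_one.trans_le (by rw [aleph_two_eq]; exact (Order.le_succ _))

lemma exists_inter_point (δ : Ordinal.{u}) (hδ : δ.cof = Cardinal.aleph 1)
    (C : ℕ → Set Ordinal.{u}) (hC : ∀ n, IsClubIn (C n) δ) :
    ∃ s, s < δ ∧ ∀ n, s ∈ C n := by
  have hδ0 : (0 : Ordinal) < δ := by
    rcases eq_zero_or_pos δ with h | h
    · rw [h, Ordinal.cof_zero] at hδ
      exact absurd hδ.symm (ne_of_gt (aleph_pos 1))
    · exact h
  have pickEx : ∀ (x : Ordinal) (n : ℕ), ∃ b, (x < δ → b ∈ C n ∧ x < b ∧ b < δ) := by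
    intro x n
    by_cases hx : x < δ
    · obtain ⟨b, hb, hxb⟩ := (hC n).2.1 x hx
      exact ⟨b, fun _ => ⟨hb, hxb, (hC n).1 b hb⟩⟩
    · exact ⟨0, fun h => absurd h hx⟩
  choose pick hpick using pickEx
  let β : ℕ → Ordinal :=
    fun k => Nat.rec (pick 0 (Nat.unpair 0).1) (fun k ih => pick ih (Nat.unpair (k+1)).1) k
  have hβ0 : β 0 = pick 0 (Nat.unpair 0).1 := rfl
  have hβsucc : ∀ k, β (k+1) = pick (β k) (Nat.unpair (k+1)).1 := fun k => rfl
  have hβ : ∀ k, β k ∈ C (Nat.unpair k).1 ∧ β k < δ := by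
    intro k
    induction k with
    | zero =>
      have h := hpick 0 (Nat.unpair 0).1 hδ0
      exact ⟨hβ0 ▸ h.1, hβ0 ▸ h.2.2⟩
    | succ k ih =>
      have h := hpick (β k) (Nat.unpair (k+1)).1 ih.2
      exact ⟨(hβsucc k) ▸ h.1, (hβsucc k) ▸ h.2.2⟩
  have hβmono : StrictMono β := by
    apply strictMono_nat_of_lt_succ
    intro k
    have h := hpick (β k) (Nat.unpair (k+1)).1 (hβ k).2
    rw [hβsucc k]
    exact h.2.1
  have hslt : (⨆ k, β k) < δ := by
    apply Ordinal.iSup_lt_ord_lift ?_ (fun k => (hβ k).2)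
    rw [Cardinal.mk_nat, Cardinal.lift_aleph0, hδ]
    exact Cardinal.aleph0_lt_aleph_one
  refine ⟨⨆ k, β k, hslt, fun n => ?_⟩
  have hTsub : β '' {k | (Nat.unpair k).1 = n} ⊆ C n := by
    rintro x ⟨k, hk, rfl⟩
    have := (hβ k).1
    rwa [hk] at this
  have hTne : (β '' {k | (Nat.unpair k).1 = n}).Nonempty :=
    ⟨β (Nat.pair n 0), ⟨Nat.pair n 0, by simp [Nat.unpair_pair], rfl⟩⟩
  have hTbdd : BddAbove (β '' {k | (Nat.unpair k).1 = n}) :=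
    (Ordinal.bddAbove_range β).mono (image_subset_range _ _)
  have hTeq : sSup (β '' {k | (Nat.unpair k).1 = n}) = ⨆ k, β k := by
    apply le_antisymm
    · apply csSup_le hTne
      rintro x ⟨k, _, rfl⟩
      exact le_ciSup (Ordinal.bddAbove_range β) k
    · apply ciSup_le
      intro k
      refine le_csSup hTbdd ⟨Nat.pair n k, by simp [Nat.unpair_pair], rfl⟩ |>.trans' ?_
      exact hβmono.monotone (Nat.right_le_pair n k)
  have := (hC n).2.2 (β '' {k | (Nat.unpair k).1 = n}) hTsub hTne (by rw [hTeq]; exact hslt)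
  rwa [hTeq] at this

lemma succ_lt_omega2 {x : Ordinal.{u}} (hx : x < omega2) : x + 1 < omega2 := by
  rw [Ordinal.add_one_eq_succ]
  exact omega2_isLimit.succ_lt hx

lemma no_injective_regressive (S : Set Ordinal.{u})
    (hstat : IsStationaryIn S omega2) (f : Ordinal.{u} → Ordinal.{u})
    (hreg : ∀ δ ∈ S, f δ < δ) (hinj : Set.InjOn f S) : False := by
  have hSsub : ∀ δ ∈ S, δ < omega2 := hstat.1
  -- `uu γ` is the unique element of `S` whose image is `γ` (or `0`)
  let uu : Ordinal → Ordinal := fun γ => sSup {δ | δ ∈ S ∧ f δ = γ}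
  have hsingle : ∀ δ ∈ S, {δ' | δ' ∈ S ∧ f δ' = f δ} = {δ} := by
    intro δ hδ
    ext x
    constructor
    · rintro ⟨hxS, hxγ⟩; exact hinj hxS hδ hxγ
    · rintro rfl; exact ⟨hδ, rfl⟩
  have hu_lt : ∀ γ, uu γ < omega2 := by
    intro γ
    rcases Set.eq_empty_or_nonempty {δ | δ ∈ S ∧ f δ = γ} with h | ⟨δ, hδ⟩
    · show sSup _ < _
      rw [h, csSup_empty]
      exact omega2_isLimit.pos
    · show sSup _ < _
      rw [← hδ.2, hsingle δ hδ.1, csSup_singleton]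
      exact hSsub δ hδ.1
  have hu_eq : ∀ δ ∈ S, uu (f δ) = δ := by
    intro δ hδ
    show sSup _ = _
    rw [hsingle δ hδ, csSup_singleton]
  -- a bounding function
  let Bd : Ordinal → Ordinal := fun x =>
    max (x + 1) ((⨆ y : x.ToType, uu (((Ordinal.ToType.mk (o := x))).symm y).1) + 1)
  have hBd_lt : ∀ x < omega2.{u}, Bd x < omega2 := by
    intro x hx
    apply max_lt (succ_lt_omega2 hx)
    apply succ_lt_omega2
    apply Ordinal.iSup_lt_ord ?_ (fun y => hu_lt _)
    rw [Cardinal.mk_toType, cof_omega2]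
    exact (Cardinal.lt_ord.mp hx)
  have hBd_gt : ∀ x, x < Bd x := fun x =>
    lt_of_lt_of_le (by rw [Ordinal.add_one_eq_succ]; exact Order.lt_succ x) (le_max_left _ _)
  have hBd_key : ∀ x, ∀ δ ∈ S, f δ < x → δ < Bd x := by
    intro x δ hδ hfx
    have h1 : δ = uu ((((Ordinal.ToType.mk (o := x))).symm (((Ordinal.ToType.mk (o := x))) ⟨f δ, hfx⟩)).1) := by
      rw [OrderIso.symm_apply_apply]
      exact (hu_eq δ hδ).symm
    have h2 : δ ≤ ⨆ y : x.ToType, uu (((Ordinal.ToType.mk (o := x))).symm y).1 := by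
      rw [h1]
      exact le_ciSup (Ordinal.bddAbove_range _) _
    calc δ ≤ _ := h2
      _ < _ + 1 := by rw [Ordinal.add_one_eq_succ]; exact Order.lt_succ _
      _ ≤ Bd x := le_max_right _ _
  -- the club of closure points
  have hclub : IsClubIn {α | α < omega2 ∧ ∀ δ ∈ S, f δ < α → δ < α} omega2 := by
    refine ⟨fun x hx => hx.1, ?_, ?_⟩
    · intro b hb
      let a : ℕ → Ordinal := fun k => Nat.rec (Bd b) (fun _ ih => Bd ih) k
      have ha0 : a 0 = Bd b := rfl
      have hasucc : ∀ k, a (k+1) = Bd (a k) := fun _ => rfl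
      have halt : ∀ k, a k < omega2 := by
        intro k
        induction k with
        | zero => exact ha0 ▸ hBd_lt b hb
        | succ k ih => exact (hasucc k) ▸ hBd_lt _ ih
      have hsup_lt : (⨆ k, a k) < omega2 := by
        apply Ordinal.iSup_lt_ord_lift ?_ halt
        rw [Cardinal.mk_nat, Cardinal.lift_aleph0, cof_omega2]
        exact aleph0_lt_aleph_two
      refine ⟨⨆ k, a k, ⟨hsup_lt, ?_⟩, ?_⟩
      · intro δ hδ hfδ
        obtain ⟨k, hk⟩ : ∃ k, f δ < a k := by
          by_contra h
          push_neg at h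
          exact absurd (ciSup_le h) (not_le.mpr hfδ)
        calc δ < Bd (a k) := hBd_key (a k) δ hδ hk
          _ = a (k+1) := (hasucc k).symm
          _ ≤ ⨆ k, a k := le_ciSup (Ordinal.bddAbove_range a) (k+1)
      · calc b < Bd b := hBd_gt b
          _ = a 0 := ha0.symm
          _ ≤ ⨆ k, a k := le_ciSup (Ordinal.bddAbove_range a) 0
    · intro T hTD hTne hTlt
      refine ⟨hTlt, ?_⟩
      intro δ hδ hfδ
      obtain ⟨t, htT, hft⟩ : ∃ t ∈ T, f δ < t := by
        by_contra h
        push_neg at h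
        exact absurd (csSup_le hTne h) (not_le.mpr hfδ)
      have hbdd : BddAbove T := ⟨omega2, fun x hx => ((hTD hx).1).le⟩
      exact lt_of_lt_of_le ((hTD htT).2 δ hδ hft) (le_csSup hbdd htT)
  obtain ⟨δ₀, hδ₀S, hδ₀D⟩ := hstat.2 _ hclub
  exact absurd (hδ₀D.2 δ₀ hδ₀S (hreg δ₀ hδ₀S)) (lt_irrefl δ₀)

theorem CH_aux (S : Set Ordinal.{u})
    (hScof : ∀ α ∈ S, α < omega2 ∧ α.cof = aleph 1)
    (hstat : IsStationaryIn S omega2)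
    (hunif : UnifC S (Fin 2)) :
    Cardinal.continuum.{u} = aleph 1 := by
  classical
  by_contra hne
  have h1 : aleph 1 < Cardinal.continuum :=
    lt_of_le_of_ne Cardinal.aleph_one_le_continuum (Ne.symm hne)
  have h2 : aleph 2 ≤ Cardinal.continuum := by
    rw [aleph_two_eq]
    exact Order.succ_le_of_lt h1
  have hcont : Cardinal.continuum = #(ULift.{u} ℕ → ULift.{u} (Fin 2)) := by
    rw [← Cardinal.two_power_aleph0, ← Cardinal.power_def]
    congr 1 <;> simp [Cardinal.mk_uLift]
  obtain ⟨j⟩ : Nonempty (omega2.ToType ↪ (ULift ℕ → ULift (Fin 2))) := by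
    rw [← Cardinal.le_def]
    calc #omega2.ToType = aleph 2 := by rw [omega2]; exact Cardinal.mk_ord_toType _
      _ ≤ Cardinal.continuum := h2
      _ = _ := hcont
  set η : Ordinal → ℕ → Fin 2 := fun ξ n =>
    if h : ξ < omega2 then (j ((Ordinal.ToType.mk (o := omega2)) ⟨ξ, h⟩) ⟨n⟩).down else 0 with hη
  have hηinj : ∀ ξ, ξ < omega2 → ∀ ξ', ξ' < omega2 → η ξ = η ξ' → ξ = ξ' := by
    intro ξ hξ ξ' hξ' h
    have hj : j ((Ordinal.ToType.mk (o := omega2)) ⟨ξ, hξ⟩) =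
        j ((Ordinal.ToType.mk (o := omega2)) ⟨ξ', hξ'⟩) := by
      funext y
      obtain ⟨n⟩ := y
      have hn := congrFun h n
      rw [hη] at hn
      simp only [dif_pos hξ, dif_pos hξ'] at hn
      exact ULift.down_injective hn
    have := ((Ordinal.ToType.mk (o := omega2))).injective (j.injective hj)
    exact Subtype.mk_eq_mk.mp this
  choose H hH using fun n : ℕ => hunif (fun ξ => η ξ n)
  choose Cl hCl₁ hCl₂ using fun (n : ℕ) (α : Ordinal) (h : α ∈ S) => hH n α h
  have hpoint : ∀ δ (hδ : δ ∈ S), ∃ s, s < δ ∧ ∀ n, s ∈ Cl n δ hδ := by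
    intro δ hδ
    exact exists_inter_point δ (hScof δ hδ).2 (fun n => Cl n δ hδ) (fun n => hCl₁ n δ hδ)
  refine no_injective_regressive S hstat
    (fun δ => if h : δ ∈ S then (hpoint δ h).choose else 0) ?_ ?_
  · intro δ h
    simp only [dif_pos h]
    exact (hpoint δ h).choose_spec.1
  · intro δ hδ δ' hδ' heq
    simp only [dif_pos hδ, dif_pos hδ'] at heq
    have hηeq : η δ = η δ' := by
      funext n
      have e1 := hCl₂ n δ hδ _ ((hpoint δ hδ).choose_spec.2 n)
      have e2 := hCl₂ n δ' hδ' _ ((hpoint δ' hδ').choose_spec.2 n)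
      rw [← e1, ← e2, heq]
    exact hηinj δ (hScof δ hδ).1 δ' (hScof δ' hδ').1 hηeq


lemma aleph_one_eq : (aleph 1 : Cardinal.{u}) = Order.succ ℵ₀ := by
  have h1 : (1 : Ordinal) = Order.succ 0 := by rw [← Ordinal.add_one_eq_succ, zero_add]
  rw [h1, Cardinal.aleph_succ, Cardinal.aleph_zero]

lemma CH_transfer.{v, w} (h : Cardinal.continuum.{v} = aleph 1) :
    Cardinal.continuum.{w} = aleph 1 := by
  rw [aleph_one_eq] at h ⊢
  have key : Cardinal.lift.{v} Cardinal.continuum.{w} = Cardinal.lift.{v} (Order.succ ℵ₀) := by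
    calc Cardinal.lift.{v} Cardinal.continuum.{w} = Cardinal.continuum.{max w v} :=
          Cardinal.lift_continuum
      _ = Cardinal.lift.{w} Cardinal.continuum.{v} := Cardinal.lift_continuum.symm
      _ = Cardinal.lift.{w} (Order.succ ℵ₀) := by rw [h]
      _ = Order.succ ℵ₀ := by rw [Cardinal.lift_succ, Cardinal.lift_aleph0]
      _ = Cardinal.lift.{v} (Order.succ ℵ₀) := by rw [Cardinal.lift_succ, Cardinal.lift_aleph0]
  exact Cardinal.lift_inj.mp key

end ShelahAux

/-- Theorem 2.3 (Shelah): if `S ⊆ {α < ω₂ : cf α = ω₁}` is stationary in `ω₂` and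
`Unif^c_{S,2}` holds, then CH holds. -/
theorem stmt5 (S : Set Ordinal)
    (hScof : ∀ α ∈ S, α < omega2 ∧ α.cof = aleph 1)
    (hstat : IsStationaryIn S omega2)
    (hunif : UnifC S (Fin 2)) :
    Cardinal.continuum = aleph 1 :=
  CH_transfer (CH_aux S hScof hstat hunif)
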